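/- Let G = (V, E) be a finite simple undirected graph with independence number α₁, let r : V → [0, 1], and let β > 0 be a real number. Then ∑_{v ∈ V} r(v) · ( ∏_{w ∈ N(v)} (1 − r(w)) )^β ≤ α₁ / β, where N(v) denotes the closed neighborhood of v. -/

import Mathlib

open Finset

/-- Weighted Caro–Wei type lemma: the fractional sum `∑ q v / Q v` (with `Q v` the
closed-neighborhood weight within `s`) is bounded by any bound on independent sets in `s`. -/
private lemma keyFrac {V : Type*} [Fintype V] [DecidableEq V] (G : SimpleGraph V)
    [DecidableRel G.Adj] (q : V → ℝ) (hq : ∀ v, 0 ≤ q v) :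
    ∀ (n : ℕ) (s : Finset V), s.card ≤ n → ∀ (k : ℕ),
      (∀ t ⊆ s, (∀ v ∈ t, ∀ w ∈ t, ¬ G.Adj v w) → t.card ≤ k) →
      ∑ v ∈ s, q v / (∑ w ∈ (insert v (G.neighborFinset v)) ∩ s, q w) ≤ (k : ℝ) := by
  intro n
  induction n with
  | zero =>
      intro s hs k _
      have : s = ∅ := Finset.card_eq_zero.mp (Nat.le_zero.mp hs)
      simp [this]
  | succ n ih =>
      intro s hs k hk
      set Q : V → ℝ := fun v => ∑ w ∈ (insert v (G.neighborFinset v)) ∩ s, q w with hQ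
      by_cases hP : ∃ v ∈ s, 0 < q v
      · obtain ⟨v₀, hv₀⟩ := hP
        have hPne : (s.filter (fun v => 0 < q v)).Nonempty :=
          ⟨v₀, Finset.mem_filter.mpr ⟨hv₀.1, hv₀.2⟩⟩
        obtain ⟨v₁, hv₁mem, hmin⟩ := Finset.exists_min_image _ Q hPne
        have hv₁s : v₁ ∈ s := (Finset.mem_filter.mp hv₁mem).1
        have hv₁pos : 0 < q v₁ := (Finset.mem_filter.mp hv₁mem).2
        set A : Finset V := (insert v₁ (G.neighborFinset v₁)) ∩ s with hA
        have hAs : A ⊆ s := Finset.inter_subset_right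
        have hv₁A : v₁ ∈ A := Finset.mem_inter.mpr ⟨Finset.mem_insert_self _ _, hv₁s⟩
        have hQv₁pos : 0 < Q v₁ :=
          lt_of_lt_of_le hv₁pos (Finset.single_le_sum (fun i _ => hq i) hv₁A)
        -- bound the part over A by 1
        have hApart : ∑ w ∈ A, q w / Q w ≤ 1 := by
          have h1 : ∑ w ∈ A, q w / Q w ≤ ∑ w ∈ A, q w / Q v₁ := by
            apply Finset.sum_le_sum
            intro w hw
            by_cases hqw : 0 < q w
            · have hwP : w ∈ s.filter (fun v => 0 < q v) :=
                Finset.mem_filter.mpr ⟨hAs hw, hqw⟩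
              have hQw : Q v₁ ≤ Q w := hmin w hwP
              exact div_le_div_of_nonneg_left (hq w) hQv₁pos hQw
            · have : q w = 0 := le_antisymm (not_lt.mp hqw) (hq w)
              simp [this]
          have h2 : ∑ w ∈ A, q w / Q v₁ = 1 := by
            rw [← Finset.sum_div]
            have : ∑ w ∈ A, q w = Q v₁ := rfl
            rw [this, div_self (ne_of_gt hQv₁pos)]
          linarith
        -- the rest
        set s' : Finset V := s \ A with hs'
        have hv₁s' : v₁ ∉ s' := fun h => (Finset.mem_sdiff.mp h).2 hv₁A
        have hs'card : s'.card ≤ n := by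
          have hss : s' ⊂ s :=
            Finset.ssubset_iff_of_subset Finset.sdiff_subset |>.mpr ⟨v₁, hv₁s, hv₁s'⟩
          have := Finset.card_lt_card hss
          omega
        have hk1 : 1 ≤ k := by
          have := hk {v₁} (by simpa using hv₁s) (by
            intro a ha b hb
            rw [Finset.mem_singleton] at ha hb
            rw [ha, hb]
            exact G.loopless.irrefl v₁)
          simpa using this
        have hk' : ∀ t ⊆ s', (∀ v ∈ t, ∀ w ∈ t, ¬ G.Adj v w) → t.card ≤ k - 1 := by
          intro t hts ht
          have hv₁t : v₁ ∉ t := fun h => hv₁s' (hts h)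
          have hnadj : ∀ b ∈ t, ¬ G.Adj v₁ b := by
            intro b hb hadj
            have hbs' := hts hb
            have hbs : b ∈ s := (Finset.mem_sdiff.mp hbs').1
            have hbA : b ∈ A := Finset.mem_inter.mpr
              ⟨Finset.mem_insert_of_mem ((G.mem_neighborFinset v₁ b).mpr hadj), hbs⟩
            exact (Finset.mem_sdiff.mp hbs').2 hbA
          have hins : insert v₁ t ⊆ s :=
            Finset.insert_subset hv₁s (hts.trans Finset.sdiff_subset)
          have hindep : ∀ v ∈ insert v₁ t, ∀ w ∈ insert v₁ t, ¬ G.Adj v w := by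
            intro a ha b hb hadj
            rcases Finset.mem_insert.mp ha with h1 | h1
            · subst h1
              rcases Finset.mem_insert.mp hb with h2 | h2
              · subst h2; exact G.loopless.irrefl _ hadj
              · exact hnadj b h2 hadj
            · rcases Finset.mem_insert.mp hb with h2 | h2
              · subst h2; exact hnadj a h1 hadj.symm
              · exact ht a h1 b h2 hadj
          have := hk _ hins hindep
          rw [Finset.card_insert_of_notMem hv₁t] at this
          omega
        -- inner Q for s'
        have hBpart : ∑ v ∈ s', q v / Q v ≤ ((k - 1 : ℕ) : ℝ) := by
          have hmono : ∀ v ∈ s', q v / Q v ≤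
              q v / (∑ w ∈ (insert v (G.neighborFinset v)) ∩ s', q w) := by
            intro v hv
            set Q' := ∑ w ∈ (insert v (G.neighborFinset v)) ∩ s', q w with hQ'
            have hvmem : v ∈ (insert v (G.neighborFinset v)) ∩ s' :=
              Finset.mem_inter.mpr ⟨Finset.mem_insert_self _ _, hv⟩
            have hqvle : q v ≤ Q' := Finset.single_le_sum (fun i _ => hq i) hvmem
            by_cases h0 : 0 < q v
            · have hQ'pos : 0 < Q' := lt_of_lt_of_le h0 hqvle
              have hsub : (insert v (G.neighborFinset v)) ∩ s' ⊆
                  (insert v (G.neighborFinset v)) ∩ s :=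
                Finset.inter_subset_inter (le_refl _) Finset.sdiff_subset
              have hle : Q' ≤ Q v :=
                Finset.sum_le_sum_of_subset_of_nonneg hsub (fun i _ _ => hq i)
              exact div_le_div_of_nonneg_left (hq v) hQ'pos hle
            · have : q v = 0 := le_antisymm (not_lt.mp h0) (hq v)
              simp [this]
          calc ∑ v ∈ s', q v / Q v
              ≤ ∑ v ∈ s', q v / (∑ w ∈ (insert v (G.neighborFinset v)) ∩ s', q w) :=
                Finset.sum_le_sum hmono
            _ ≤ ((k - 1 : ℕ) : ℝ) := ih s' hs'card (k - 1) hk'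
        have hsplit : ∑ v ∈ s', q v / Q v + ∑ v ∈ A, q v / Q v = ∑ v ∈ s, q v / Q v :=
          Finset.sum_sdiff hAs
        have hcast : ((k - 1 : ℕ) : ℝ) + 1 = (k : ℝ) := by
          rw [Nat.cast_sub hk1]; push_cast; ring
        linarith
      · push_neg at hP
        have : ∀ v ∈ s, q v / Q v = 0 := by
          intro v hv
          have : q v = 0 := le_antisymm (hP v hv) (hq v)
          simp [this]
        rw [Finset.sum_congr rfl this]
        simp

/-- analytic bound: `x * exp (-(β * R)) ≤ (x / R) / β` for `0 ≤ x ≤ R`. -/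
private lemma pointwiseExp {β : ℝ} (hβ : 0 < β) {x R : ℝ} (hx : 0 ≤ x) (hxR : x ≤ R) :
    x * Real.exp (-(β * R)) ≤ (x / R) / β := by
  rcases eq_or_lt_of_le (hx.trans hxR) with hR | hR
  · have hx0 : x = 0 := le_antisymm (hxR.trans hR.symm.le) hx
    simp [hx0]
  · have hβR : 0 < β * R := mul_pos hβ hR
    have hexp : β * R ≤ Real.exp (β * R) := by
      have := Real.add_one_le_exp (β * R); linarith
    have h1 : Real.exp (-(β * R)) ≤ 1 / (β * R) := by
      rw [Real.exp_neg]
      rw [inv_eq_one_div]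
      apply div_le_div_of_nonneg_left one_pos.le hβR hexp
    calc x * Real.exp (-(β * R)) ≤ x * (1 / (β * R)) :=
          mul_le_mul_of_nonneg_left h1 hx
      _ = (x / R) / β := by rw [mul_one_div, div_div, mul_comm β R]
  
theorem stmt12 {V : Type*} [Fintype V] [DecidableEq V] (G : SimpleGraph V) [DecidableRel G.Adj]
    (α₁ : ℕ)
    (hα : IsGreatest
      {n : ℕ | ∃ s : Finset V, s.card = n ∧ ∀ v ∈ s, ∀ w ∈ s, ¬ G.Adj v w} α₁)
    (r : V → ℝ) (hr : ∀ v, r v ∈ Set.Icc (0 : ℝ) 1)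
    (β : ℝ) (hβ : 0 < β) :
    ∑ v, r v * (∏ w ∈ insert v (G.neighborFinset v), (1 - r w)) ^ β ≤ (α₁ : ℝ) / β := by
  have hr0 : ∀ v, 0 ≤ r v := fun v => (hr v).1
  have hr1 : ∀ v, r v ≤ 1 := fun v => (hr v).2
  set R : V → ℝ := fun v => ∑ w ∈ insert v (G.neighborFinset v), r w with hR
  have key : ∑ v, r v / R v ≤ (α₁ : ℝ) := by
    have h := keyFrac G r hr0 (Finset.univ.card) Finset.univ le_rfl α₁
      (fun t _ ht => hα.2 ⟨t, rfl, ht⟩)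
    simpa [hR] using h
  have step : ∀ v, r v * (∏ w ∈ insert v (G.neighborFinset v), (1 - r w)) ^ β
      ≤ (r v / R v) / β := by
    intro v
    have hprodnn : (0 : ℝ) ≤ ∏ w ∈ insert v (G.neighborFinset v), (1 - r w) :=
      Finset.prod_nonneg fun i _ => by linarith [hr1 i]
    have h1 : ∏ w ∈ insert v (G.neighborFinset v), (1 - r w) ≤ Real.exp (-(R v)) := by
      have : -(R v) = ∑ w ∈ insert v (G.neighborFinset v), -(r w) := by
        simp [hR]
      rw [this, Real.exp_sum]
      exact Finset.prod_le_prod (fun i _ => by linarith [hr1 i])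
        (fun i _ => by linarith [Real.add_one_le_exp (-(r i))])
    have h2 : (∏ w ∈ insert v (G.neighborFinset v), (1 - r w)) ^ β
        ≤ Real.exp (-(β * R v)) := by
      calc (∏ w ∈ insert v (G.neighborFinset v), (1 - r w)) ^ β
          ≤ (Real.exp (-(R v))) ^ β := Real.rpow_le_rpow hprodnn h1 hβ.le
        _ = Real.exp (-(β * R v)) := by
            rw [Real.rpow_def_of_pos (Real.exp_pos _), Real.log_exp]
            ring_nf
    have hrleR : r v ≤ R v :=
      Finset.single_le_sum (fun i _ => hr0 i) (Finset.mem_insert_self v _)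
    calc r v * (∏ w ∈ insert v (G.neighborFinset v), (1 - r w)) ^ β
        ≤ r v * Real.exp (-(β * R v)) := mul_le_mul_of_nonneg_left h2 (hr0 v)
      _ ≤ (r v / R v) / β := pointwiseExp hβ (hr0 v) hrleR
  calc ∑ v, r v * (∏ w ∈ insert v (G.neighborFinset v), (1 - r w)) ^ β
      ≤ ∑ v, (r v / R v) / β := Finset.sum_le_sum fun v _ => step v
    _ = (∑ v, r v / R v) / β := by rw [Finset.sum_div]
    _ ≤ (α₁ : ℝ) / β := by gcongr
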